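/- The map φ sending (V_1,…,V_n) to (V_1,…,V_n, V_{n−1}^⊥,…,V_1^⊥), where X^⊥ := {u ∈ V : ω_V(x,u) = 0 for all x ∈ X}, is a well-defined bijection from SpF^𝐢_{2n} onto the set {(V_1,…,V_{2n−1}) ∈ F^{𝐢′}_{2n} : V_{2n−k}^⊥ = V_k for all 1 ≤ k ≤ 2n−1}, with inverse given by (V_1,…,V_{2n−1}) ↦ (V_1,…,V_n). -/

import Mathlib

open Module

/-- `V = ℂ^{2n}`, with the standard basis `v_1, …, v_{2n}` given (0-indexed) by the
coordinate functions. -/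
abbrev Vs (n : ℕ) := Fin (2 * n) → ℂ

open scoped Classical in
/-- The projection `pr_K` killing the coordinates in `K` (0-indexed: the basis vector
`v_{a+1}` corresponds to the coordinate `a`). -/
noncomputable def prK (N : ℕ) (K : Set (Fin N)) : (Fin N → ℂ) →ₗ[ℂ] (Fin N → ℂ) where
  toFun x := fun a => if a ∈ K then 0 else x a
  map_add' x y := by funext a; by_cases h : a ∈ K <;> simp [h]
  map_smul' c x := by funext a; by_cases h : a ∈ K <;> simp [h]

/-- The symplectic form `ω_V` on `V = ℂ^{2n}`: `ω_V(v_a, v_b) = 0` unless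
`a + b = 2n + 1` (1-indexed) and `ω_V(v_i, v_{2n+1-i}) = 1` for `1 ≤ i ≤ n`. -/
noncomputable def omegaV (n : ℕ) : LinearMap.BilinForm ℂ (Vs n) :=
  LinearMap.mk₂ ℂ
    (fun x y => ∑ a : Fin (2 * n), (if (a : ℕ) < n then (1 : ℂ) else -1) * (x a * y a.rev))
    (fun x x' y => by simp [add_mul, mul_add, Finset.sum_add_distrib])
    (fun c x y => by simp [Finset.mul_sum, mul_assoc, mul_left_comm, mul_comm])
    (fun x y y' => by simp [mul_add, Finset.sum_add_distrib])
    (fun c x y => by simp [Finset.mul_sum, mul_assoc, mul_left_comm, mul_comm])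

/-- The structure maps of linear degenerations: `f_k = pr_{{k+1}}` (killing the basis
vector `v_{k+1}`, which is the 0-indexed coordinate `k`) if `k ∈ J`, the identity
otherwise. -/
noncomputable def fdeg (n : ℕ) (J : Finset ℕ) (k : ℕ) : Vs n →ₗ[ℂ] Vs n :=
  if k ∈ J then prK (2 * n) {a | (a : ℕ) = k} else LinearMap.id

/-- `𝐢′ = 𝐢 ∪ {2n-1-i : i ∈ 𝐢}`. -/
def Iprime (n : ℕ) (I : Finset ℕ) : Finset ℕ := I ∪ I.image (fun i => 2 * n - 1 - i)

/-- The linear degenerate symplectic flag variety `SpF^𝐢_{2n}`, as a set of tuples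
`(V_1, …, V_n)` of subspaces of `V = ℂ^{2n}` (the tuple entry of index `k : Fin n`
is `V_{k+1}`). -/
noncomputable def SpF (n : ℕ) (I : Finset ℕ) : Set (Fin n → Submodule ℂ (Vs n)) :=
  {Vt | (∀ k : Fin n, finrank ℂ ↥(Vt k) = k.1 + 1) ∧
    (∀ k : ℕ, ∀ hk : k + 1 < n,
      (Vt ⟨k, by omega⟩).map (fdeg n I (k + 1)) ≤ Vt ⟨k + 1, hk⟩) ∧
    (∀ h : n - 1 < n, Vt ⟨n - 1, h⟩ = (omegaV n).orthogonal (Vt ⟨n - 1, h⟩))}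

/-- The linear degenerate flag variety `F^{J}_{2n}` for `J ⊆ {1, …, 2n-1}`, as a set
of tuples `(V_1, …, V_{2n-1})` of subspaces of `V = ℂ^{2n}`. -/
noncomputable def Fpr (n : ℕ) (J : Finset ℕ) : Set (Fin (2 * n - 1) → Submodule ℂ (Vs n)) :=
  {Vt | (∀ k : Fin (2 * n - 1), finrank ℂ ↥(Vt k) = k.1 + 1) ∧
    (∀ k : ℕ, ∀ hk : k + 1 < 2 * n - 1,
      (Vt ⟨k, by omega⟩).map (fdeg n J (k + 1)) ≤ Vt ⟨k + 1, hk⟩)}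
/-- The map `(V_1,…,V_n) ↦ (V_1,…,V_n,V_{n-1}^⊥,…,V_1^⊥)`, where the orthogonal
complements are taken with respect to `ω_V`. -/
noncomputable def phiMap (n : ℕ) (hn : 2 ≤ n) :
    (Fin n → Submodule ℂ (Vs n)) → (Fin (2 * n - 1) → Submodule ℂ (Vs n)) :=
  fun Vt k =>
    if h : k.1 < n then Vt ⟨k.1, h⟩
    else (omegaV n).orthogonal (Vt ⟨2 * n - 2 - k.1, by omega⟩)

/-- The truncation map `(V_1,…,V_{2n-1}) ↦ (V_1,…,V_n)`. -/
def psiMap (n : ℕ) (hn : 2 ≤ n) :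
    (Fin (2 * n - 1) → Submodule ℂ (Vs n)) → (Fin n → Submodule ℂ (Vs n)) :=
  fun Wt k => Wt ⟨k.1, by have := k.isLt; omega⟩

/-- The set of tuples `(V_1,…,V_{2n-1})` with `V_{2n-k}^⊥ = V_k` for all
`1 ≤ k ≤ 2n-1`. -/
noncomputable def symTuples (n : ℕ) : Set (Fin (2 * n - 1) → Submodule ℂ (Vs n)) :=
  {Wt | ∀ k : ℕ, 1 ≤ k → k ≤ 2 * n - 1 →
    ∀ h1 : 2 * n - k - 1 < 2 * n - 1, ∀ h2 : k - 1 < 2 * n - 1,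
      (omegaV n).orthogonal (Wt ⟨2 * n - k - 1, h1⟩) = Wt ⟨k - 1, h2⟩}

lemma omegaV_apply (n : ℕ) (x y : Vs n) :
    omegaV n x y = ∑ a : Fin (2 * n), (if (a : ℕ) < n then (1 : ℂ) else -1) * (x a * y a.rev) :=
  rfl

open scoped Classical in
lemma prK_apply (N : ℕ) (K : Set (Fin N)) (x : Fin N → ℂ) (a : Fin N) :
    prK N K x a = if a ∈ K then 0 else x a := rfl

lemma omegaV_skew (n : ℕ) (x y : Vs n) : omegaV n y x = - omegaV n x y := by
  rw [omegaV_apply, omegaV_apply, ← Finset.sum_neg_distrib]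
  refine Fintype.sum_equiv (Fin.revPerm) _ _ (fun a => ?_)
  have ha : (a : ℕ) < 2 * n := a.isLt
  have hr : ((Fin.rev a : Fin (2 * n)) : ℕ) = 2 * n - ((a : ℕ) + 1) := Fin.val_rev a
  simp only [Fin.revPerm_apply, Fin.rev_rev]
  rcases lt_or_ge (a : ℕ) n with h | h
  · rw [if_pos h, if_neg (by omega)]; ring
  · rw [if_neg (by omega), if_pos (by omega)]; ring

lemma omegaV_isRefl (n : ℕ) : (omegaV n).IsRefl := by
  intro x y h
  rw [omegaV_skew, h, neg_zero]

lemma omegaV_nondeg (n : ℕ) : (omegaV n).Nondegenerate := by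
  refine LinearMap.BilinForm.Nondegenerate.ofSeparatingLeft ?_
  intro x hx
  funext a
  have h := hx (Pi.single a.rev 1 : Vs n)
  rw [omegaV_apply] at h
  have : ∀ b : Fin (2 * n),
      (if (b : ℕ) < n then (1 : ℂ) else -1) * (x b * (Pi.single a.rev 1 : Vs n) b.rev)
        = if b = a then (if (b : ℕ) < n then (1 : ℂ) else -1) * x b else 0 := by
    intro b
    rw [Pi.single_apply]
    by_cases hb : b = a
    · subst hb; rw [if_pos rfl, if_pos rfl, mul_one]
    · rw [if_neg (fun hc => hb (Fin.rev_injective hc)), if_neg hb, mul_zero, mul_zero]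
  rw [Finset.sum_congr rfl (fun b _ => this b), Finset.sum_ite_eq' _ a] at h
  simp only [Finset.mem_univ, if_pos] at h
  rcases mul_eq_zero.mp h with h | h
  · exfalso; rcases lt_or_ge (a : ℕ) n with hh | hh
    · rw [if_pos hh] at h; exact one_ne_zero h
    · rw [if_neg (by omega)] at h; exact one_ne_zero (neg_eq_zero.mp h)
  · exact h

lemma omegaV_finrank_orth (n : ℕ) (W : Submodule ℂ (Vs n)) :
    finrank ℂ ((omegaV n).orthogonal W) = 2 * n - finrank ℂ W := by
  rw [LinearMap.BilinForm.finrank_orthogonal (omegaV_nondeg n)]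
  congr 1
  simp [Module.finrank_pi]

lemma omegaV_orth_orth (n : ℕ) (W : Submodule ℂ (Vs n)) :
    (omegaV n).orthogonal ((omegaV n).orthogonal W) = W :=
  LinearMap.BilinForm.orthogonal_orthogonal (omegaV_nondeg n) (omegaV_isRefl n) W

lemma omegaV_prK (n : ℕ) (c : ℕ) (hc : c < 2 * n) (x y : Vs n) :
    omegaV n x (prK (2 * n) {a | (a : ℕ) = c} y)
      = omegaV n (prK (2 * n) {a | (a : ℕ) = 2 * n - 1 - c} x) y := by
  rw [omegaV_apply, omegaV_apply]
  refine Finset.sum_congr rfl (fun a _ => ?_)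
  have ha : (a : ℕ) < 2 * n := a.isLt
  have hr : ((Fin.rev a : Fin (2 * n)) : ℕ) = 2 * n - ((a : ℕ) + 1) := Fin.val_rev a
  rw [prK_apply, prK_apply]
  simp only [Set.mem_setOf_eq, hr]
  by_cases h : (a : ℕ) = 2 * n - 1 - c
  · have h1 : 2 * n - ((a : ℕ) + 1) = c := by omega
    rw [if_pos h1, if_pos h, mul_zero, zero_mul, mul_zero]
  · have h1 : ¬ (2 * n - ((a : ℕ) + 1) = c) := by omega
    rw [if_neg h1, if_neg h]
lemma tup_congr {m : ℕ} {α : Sort*} (Vt : Fin m → α) (a b : ℕ) (h : a = b)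
    (ha : a < m) (hb : b < m) : Vt ⟨a, ha⟩ = Vt ⟨b, hb⟩ := by subst h; rfl

lemma fdeg_of_mem (n : ℕ) {J : Finset ℕ} {k : ℕ} (h : k ∈ J) :
    fdeg n J k = prK (2 * n) {a | (a : ℕ) = k} := if_pos h

lemma fdeg_of_not_mem (n : ℕ) {J : Finset ℕ} {k : ℕ} (h : k ∉ J) :
    fdeg n J k = LinearMap.id := if_neg h

lemma fdeg_congr (n : ℕ) {J J' : Finset ℕ} {k : ℕ} (h : k ∈ J ↔ k ∈ J') :
    fdeg n J k = fdeg n J' k := by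
  unfold fdeg; rw [if_congr h rfl rfl]

lemma mem_Iprime_iff (n : ℕ) (I : Finset ℕ) (hI : ∀ i ∈ I, 1 ≤ i ∧ i ≤ n - 1)
    (hn : 2 ≤ n) (k : ℕ) (hk : k < n) : k ∈ Iprime n I ↔ k ∈ I := by
  simp only [Iprime, Finset.mem_union, Finset.mem_image]
  constructor
  · rintro (h | ⟨i, hi, rfl⟩)
    · exact h
    · have := hI i hi; exact absurd hk (by omega)
  · exact Or.inl

lemma n_mem_Iprime (n : ℕ) (I : Finset ℕ) (hI : ∀ i ∈ I, 1 ≤ i ∧ i ≤ n - 1)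
    (hn : 2 ≤ n) : n ∈ Iprime n I ↔ n - 1 ∈ I := by
  simp only [Iprime, Finset.mem_union, Finset.mem_image]
  constructor
  · rintro (h | ⟨i, hi, he⟩)
    · have := hI n h; omega
    · have := hI i hi
      have hie : i = n - 1 := by omega
      exact hie ▸ hi
  · intro h
    exact Or.inr ⟨n - 1, h, by have := hI _ h; omega⟩

lemma big_mem_Iprime (n : ℕ) (I : Finset ℕ) (hI : ∀ i ∈ I, 1 ≤ i ∧ i ≤ n - 1)
    (k : ℕ) (hk : n < k) (hk2 : k ≤ 2 * n - 2) :
    k ∈ Iprime n I ↔ 2 * n - 1 - k ∈ I := by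
  simp only [Iprime, Finset.mem_union, Finset.mem_image]
  constructor
  · rintro (h | ⟨i, hi, he⟩)
    · have := hI k h; omega
    · have := hI i hi
      have hie : 2 * n - 1 - k = i := by omega
      exact hie ▸ hi
  · intro h
    exact Or.inr ⟨2 * n - 1 - k, h, by have := hI _ h; omega⟩

lemma psi_phi (n : ℕ) (hn : 2 ≤ n) (Vt : Fin n → Submodule ℂ (Vs n)) :
    psiMap n hn (phiMap n hn Vt) = Vt := by
  funext k
  exact dif_pos k.isLt

lemma phi_psi (n : ℕ) (hn : 2 ≤ n) {Wt : Fin (2 * n - 1) → Submodule ℂ (Vs n)}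
    (hW : Wt ∈ symTuples n) : phiMap n hn (psiMap n hn Wt) = Wt := by
  funext k
  have hk2 : (k : ℕ) < 2 * n - 1 := k.isLt
  by_cases h : (k : ℕ) < n
  · exact dif_pos h
  · rw [show phiMap n hn (psiMap n hn Wt) k
        = (omegaV n).orthogonal (psiMap n hn Wt ⟨2 * n - 2 - (k : ℕ), by omega⟩) from dif_neg h]
    have := hW ((k : ℕ) + 1) (by omega) (by omega) (by omega) (by omega)
    rw [tup_congr Wt (2 * n - ((k : ℕ) + 1) - 1) (2 * n - 2 - (k : ℕ)) (by omega)
      (by omega) (by omega)] at this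
    exact this
lemma phiMap_mk_lt (n : ℕ) (hn : 2 ≤ n) (Vt : Fin n → Submodule ℂ (Vs n))
    (a : ℕ) (ha : a < 2 * n - 1) (h : a < n) :
    phiMap n hn Vt ⟨a, ha⟩ = Vt ⟨a, h⟩ := dif_pos h

lemma phiMap_mk_ge (n : ℕ) (hn : 2 ≤ n) (Vt : Fin n → Submodule ℂ (Vs n))
    (a : ℕ) (ha : a < 2 * n - 1) (h : ¬ a < n) (h2 : 2 * n - 2 - a < n) :
    phiMap n hn Vt ⟨a, ha⟩ = (omegaV n).orthogonal (Vt ⟨2 * n - 2 - a, h2⟩) := dif_neg h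

lemma phi_mem (n : ℕ) (hn : 2 ≤ n) (I : Finset ℕ) (hI : ∀ i ∈ I, 1 ≤ i ∧ i ≤ n - 1)
    {Vt : Fin n → Submodule ℂ (Vs n)} (hV : Vt ∈ SpF n I) :
    phiMap n hn Vt ∈ Fpr n (Iprime n I) ∩ symTuples n := by
  obtain ⟨hdim, hflag, hlag⟩ := hV
  have horth := hlag (by omega)
  have hflag' : ∀ j : ℕ, ∀ hj : j < n, 1 ≤ j → ∀ hj0 : j - 1 < n,
      ∀ u, u ∈ Vt ⟨j - 1, hj0⟩ → fdeg n I j u ∈ Vt ⟨j, hj⟩ := by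
    intro j hj hj1 hj0 u hu
    obtain ⟨j', rfl⟩ : ∃ j', j = j' + 1 := ⟨j - 1, by omega⟩
    exact hflag j' hj (Submodule.mem_map_of_mem (f := fdeg n I (j' + 1)) hu)
  refine ⟨⟨?_, ?_⟩, ?_⟩
  · -- dimensions
    intro k
    have hk2 : (k : ℕ) < 2 * n - 1 := k.isLt
    by_cases h : (k : ℕ) < n
    · rw [show phiMap n hn Vt k = Vt ⟨(k : ℕ), h⟩ from dif_pos h]
      exact hdim ⟨(k : ℕ), h⟩
    · rw [show phiMap n hn Vt k
          = (omegaV n).orthogonal (Vt ⟨2 * n - 2 - (k : ℕ), by omega⟩) from dif_neg h]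
      rw [omegaV_finrank_orth,
          show finrank ℂ ↥(Vt ⟨2 * n - 2 - (k : ℕ), by omega⟩) = 2 * n - 2 - (k : ℕ) + 1
            from hdim _]
      omega
  · -- flag conditions
    intro k hk
    rcases lt_trichotomy (k + 1) n with h | h | h
    · -- k + 1 < n
      rw [phiMap_mk_lt n hn Vt k (by omega) (by omega),
          phiMap_mk_lt n hn Vt (k + 1) hk h,
          fdeg_congr n (mem_Iprime_iff n I hI hn (k + 1) h)]
      exact hflag k h
    · -- k + 1 = n
      rw [phiMap_mk_lt n hn Vt k (by omega) (by omega),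
          tup_congr Vt k (n - 1) (by omega) (by omega) (by omega),
          phiMap_mk_ge n hn Vt (k + 1) hk (by omega) (by omega),
          tup_congr Vt (2 * n - 2 - (k + 1)) (n - 2) (by omega) (by omega) (by omega)]
      have hiff : k + 1 ∈ Iprime n I ↔ n - 1 ∈ I := by
        rw [h]; exact n_mem_Iprime n I hI hn
      by_cases hin : n - 1 ∈ I
      · rw [fdeg_of_mem n (hiff.mpr hin)]
        intro x hx
        obtain ⟨u, hu, rfl⟩ := Submodule.mem_map.mp hx
        rw [LinearMap.BilinForm.mem_orthogonal_iff]
        intro w hw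
        rw [omegaV_prK n (k + 1) (by omega),
            show 2 * n - 1 - (k + 1) = n - 1 from by omega]
        have hw1 : prK (2 * n) {a | (a : ℕ) = n - 1} w ∈ Vt ⟨n - 1, by omega⟩ := by
          rw [← fdeg_of_mem n hin]
          exact hflag' (n - 1) (by omega) (by omega) (by omega) w
            ((tup_congr Vt (n - 2) (n - 1 - 1) (by omega) (by omega) (by omega)) ▸ hw)
        have hu' : u ∈ (omegaV n).orthogonal (Vt ⟨n - 1, by omega⟩) := horth ▸ hu
        exact LinearMap.BilinForm.mem_orthogonal_iff.mp hu' _ hw1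
      · rw [fdeg_of_not_mem n (fun hc => hin (hiff.mp hc)),
            Submodule.map_id]
        intro x hx
        rw [LinearMap.BilinForm.mem_orthogonal_iff]
        intro w hw
        have hw1 : w ∈ Vt ⟨n - 1, by omega⟩ := by
          have := hflag' (n - 1) (by omega) (by omega) (by omega) w
            ((tup_congr Vt (n - 2) (n - 1 - 1) (by omega) (by omega) (by omega)) ▸ hw)
          rwa [fdeg_of_not_mem n hin] at this
        have hx' : x ∈ (omegaV n).orthogonal (Vt ⟨n - 1, by omega⟩) := horth ▸ hx
        exact LinearMap.BilinForm.mem_orthogonal_iff.mp hx' _ hw1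
    · -- n < k + 1
      rw [phiMap_mk_ge n hn Vt k (by omega) (by omega) (by omega),
          phiMap_mk_ge n hn Vt (k + 1) hk (by omega) (by omega),
          tup_congr Vt (2 * n - 2 - (k + 1)) (2 * n - 2 - k - 1) (by omega) (by omega)
            (by omega)]
      have hiff := big_mem_Iprime n I hI (k + 1) (by omega) (by omega)
      rw [show 2 * n - 1 - (k + 1) = 2 * n - 2 - k from by omega] at hiff
      by_cases hin : 2 * n - 2 - k ∈ I
      · rw [fdeg_of_mem n (hiff.mpr hin)]
        intro x hx
        obtain ⟨u, hu, rfl⟩ := Submodule.mem_map.mp hx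
        rw [LinearMap.BilinForm.mem_orthogonal_iff]
        intro w hw
        rw [omegaV_prK n (k + 1) (by omega),
            show 2 * n - 1 - (k + 1) = 2 * n - 2 - k from by omega]
        have hw1 : prK (2 * n) {a | (a : ℕ) = 2 * n - 2 - k} w
            ∈ Vt ⟨2 * n - 2 - k, by omega⟩ := by
          rw [← fdeg_of_mem n hin]
          exact hflag' (2 * n - 2 - k) (by omega) (by omega) (by omega) w hw
        exact LinearMap.BilinForm.mem_orthogonal_iff.mp hu _ hw1
      · rw [fdeg_of_not_mem n (fun hc => hin (hiff.mp hc)), Submodule.map_id]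
        refine LinearMap.BilinForm.orthogonal_le ?_
        intro w hw
        have := hflag' (2 * n - 2 - k) (by omega) (by omega) (by omega) w hw
        rwa [fdeg_of_not_mem n hin] at this
  · -- symTuples
    intro k hk1 hk2 h1 h2
    rcases lt_trichotomy k n with hc | hc | hc
    · rw [phiMap_mk_ge n hn Vt (2 * n - k - 1) h1 (by omega) (by omega),
          tup_congr Vt (2 * n - 2 - (2 * n - k - 1)) (k - 1) (by omega) (by omega) (by omega),
          phiMap_mk_lt n hn Vt (k - 1) h2 (by omega),
          omegaV_orth_orth]
    · rw [phiMap_mk_lt n hn Vt (2 * n - k - 1) h1 (by omega),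
          tup_congr Vt (2 * n - k - 1) (n - 1) (by omega) (by omega) (by omega),
          phiMap_mk_lt n hn Vt (k - 1) h2 (by omega),
          tup_congr Vt (k - 1) (n - 1) (by omega) (by omega) (by omega)]
      exact (hlag (by omega)).symm
    · rw [phiMap_mk_lt n hn Vt (2 * n - k - 1) h1 (by omega),
          phiMap_mk_ge n hn Vt (k - 1) h2 (by omega) (by omega),
          tup_congr Vt (2 * n - 2 - (k - 1)) (2 * n - k - 1) (by omega) (by omega) (by omega)]

lemma psi_mem (n : ℕ) (hn : 2 ≤ n) (I : Finset ℕ) (hI : ∀ i ∈ I, 1 ≤ i ∧ i ≤ n - 1)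
    {Wt : Fin (2 * n - 1) → Submodule ℂ (Vs n)}
    (hW : Wt ∈ Fpr n (Iprime n I) ∩ symTuples n) : psiMap n hn Wt ∈ SpF n I := by
  obtain ⟨⟨hdim, hflag⟩, hsym⟩ := hW
  refine ⟨fun k => hdim _, ?_, ?_⟩
  · intro k hk
    have hthis := hflag k (by omega)
    rw [fdeg_congr n (mem_Iprime_iff n I hI hn (k + 1) (by omega))] at hthis
    exact hthis
  · intro h
    have hthis := hsym n (by omega) (by omega) (by omega) (by omega)
    rw [tup_congr Wt (2 * n - n - 1) (n - 1) (by omega) (by omega) (by omega)] at hthis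
    exact hthis.symm
theorem sympl_flag_bijection (n : ℕ) (hn : 2 ≤ n) (I : Finset ℕ)
    (hI : ∀ i ∈ I, 1 ≤ i ∧ i ≤ n - 1) :
    Set.BijOn (phiMap n hn) (SpF n I) (Fpr n (Iprime n I) ∩ symTuples n) ∧
      Set.InvOn (psiMap n hn) (phiMap n hn) (SpF n I)
        (Fpr n (Iprime n I) ∩ symTuples n) := by
  have hleft : Set.LeftInvOn (psiMap n hn) (phiMap n hn) (SpF n I) :=
    fun Vt _ => psi_phi n hn Vt
  have hright : Set.RightInvOn (psiMap n hn) (phiMap n hn)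
      (Fpr n (Iprime n I) ∩ symTuples n) := fun Wt hW => phi_psi n hn hW.2
  refine ⟨⟨fun Vt hV => phi_mem n hn I hI hV, hleft.injOn, ?_⟩, hleft, hright⟩
  intro Wt hW
  exact ⟨psiMap n hn Wt, psi_mem n hn I hI hW, hright hW⟩
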